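/- Let L and k be natural numbers with k < L. Then Real.log (1 - 2^(k - L : ℝ)) / Real.log (1 - 1/2^L) ≥ 2^k. That is, the collision-included probabilistic counting estimate M̃_CIPC = log_{1 - 2^{-L}}(1 - 2^{k-L}) is at least the raw estimate 2^k. -/

import Mathlib

/-- The collision-included probabilistic counting estimate
`log (1 - 2^(k-L)) / log (1 - 1/2^L)` is at least the raw estimate `2^k`. -/
theorem cipc_ge_raw (L k : ℕ) (hk : k < L) :
    Real.log (1 - (2 : ℝ) ^ ((k : ℝ) - (L : ℝ))) / Real.log (1 - 1 / 2 ^ L)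
      ≥ 2 ^ k := by
  have h2 : (0:ℝ) < 2 := by norm_num
  have hpowL : (0:ℝ) < 2 ^ L := by positivity
  have hrp : (2 : ℝ) ^ ((k : ℝ) - (L : ℝ)) = 2 ^ k / 2 ^ L := by
    rw [Real.rpow_sub h2, Real.rpow_natCast, Real.rpow_natCast]
  have hlt1 : (2:ℝ) ^ k / 2 ^ L < 1 := by
    rw [div_lt_one hpowL]
    exact pow_lt_pow_right₀ (by norm_num) hk
  have hb : (0:ℝ) < 1 - 1 / 2 ^ L := by
    have : (1:ℝ) / 2 ^ L < 1 := by
      rw [div_lt_one hpowL]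
      exact one_lt_pow₀ (by norm_num) (Nat.pos_of_ne_zero (by omega)).ne'
    linarith
  have hblt1 : (1:ℝ) - 1 / 2 ^ L < 1 := by
    have : (0:ℝ) < 1 / 2 ^ L := by positivity
    linarith
  have hlogneg : Real.log (1 - 1 / 2 ^ L) < 0 :=
    Real.log_neg hb hblt1
  rw [ge_iff_le, le_div_iff_of_neg hlogneg]
  -- Bernoulli: (1 - 1/2^L)^(2^k) ≥ 1 - 2^k/2^L
  have hbern : 1 - (2:ℝ) ^ k / 2 ^ L ≤ (1 - 1 / 2 ^ L) ^ (2 ^ k : ℕ) := by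
    have := one_add_mul_le_pow (a := -(1 / 2 ^ L : ℝ)) (by
      have : (1:ℝ) / 2 ^ L ≤ 1 := by
        rw [div_le_one hpowL]; exact one_le_pow₀ (by norm_num)
      linarith) (2 ^ k)
    have heq : (1:ℝ) + (2 ^ k : ℕ) * -(1 / 2 ^ L) = 1 - 2 ^ k / 2 ^ L := by
      push_cast; ring
    rw [heq] at this
    rwa [← sub_eq_add_neg] at this
  calc Real.log (1 - (2 : ℝ) ^ ((k : ℝ) - (L : ℝ)))
      = Real.log (1 - 2 ^ k / 2 ^ L) := by rw [hrp]
    _ ≤ Real.log ((1 - 1 / 2 ^ L) ^ (2 ^ k : ℕ)) := by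
        apply Real.log_le_log (by linarith) hbern
    _ = (2 ^ k : ℕ) * Real.log (1 - 1 / 2 ^ L) := Real.log_pow _ _
    _ = 2 ^ k * Real.log (1 - 1 / 2 ^ L) := by push_cast; ring
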